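/- The infinite product over all primes ∏_{p prime} (1 − 2/(p² + 1)) converges and equals 2/5. -/

import Mathlib

open Real

/-- The completely multiplicative function `n ↦ (n⁻¹)^k` on `ℕ` (as a `MonoidWithZeroHom`). -/
noncomputable def invPowHom (k : ℕ) (hk : k ≠ 0) : ℕ →*₀ ℝ where
  toFun n := ((n : ℝ)⁻¹) ^ k
  map_zero' := by simp [hk]
  map_one' := by simp
  map_mul' m n := by push_cast; rw [mul_inv, mul_pow]

lemma invPowHom_summable_norm (k : ℕ) (hk : 2 ≤ k) :
    Summable (fun n => ‖invPowHom k (by omega) n‖) := by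
  have := Real.summable_one_div_nat_pow.mpr hk
  refine this.congr fun n => ?_
  simp [invPowHom, abs_of_nonneg, inv_pow, one_div]

lemma hasProd_inv_of_hasProd {ι : Type*} {f : ι → ℝ} {a : ℝ} (h : HasProd f a) (ha : a ≠ 0) :
    HasProd (fun i => (f i)⁻¹) a⁻¹ := by
  have : Filter.Tendsto (fun s : Finset ι => (∏ i ∈ s, f i)⁻¹) Filter.atTop (nhds a⁻¹) :=
    by simpa [HasProd, Finset.prod_inv_distrib] using h.inv₀ ha
  simpa [HasProd, Finset.prod_inv_distrib] using this

/-- The infinite product over all primes `∏_p (1 − 2/(p² + 1))` converges and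
equals `2/5`. -/
theorem prod_primes_one_sub_two_div :
    Multipliable (fun p : Nat.Primes => 1 - 2 / ((p : ℝ) ^ 2 + 1)) ∧
    (∏' p : Nat.Primes, (1 - 2 / ((p : ℝ) ^ 2 + 1))) = 2 / 5 := by
  have h2 := EulerProduct.eulerProduct_completely_multiplicative_hasProd
    (invPowHom_summable_norm 2 le_rfl)
  have h4 := EulerProduct.eulerProduct_completely_multiplicative_hasProd
    (invPowHom_summable_norm 4 (by norm_num))
  have t2 : (∑' n : ℕ, invPowHom 2 (by norm_num) n) = π ^ 2 / 6 := by
    rw [← hasSum_zeta_two.tsum_eq]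
    congr 1; funext n; simp [invPowHom, inv_pow, one_div]
  have t4 : (∑' n : ℕ, invPowHom 4 (by norm_num) n) = π ^ 4 / 90 := by
    rw [← hasSum_zeta_four.tsum_eq]
    congr 1; funext n; simp [invPowHom, inv_pow, one_div]
  rw [t2] at h2
  rw [t4] at h4
  have hpi2 : (π : ℝ) ^ 2 / 6 ≠ 0 := by positivity
  have h2' := hasProd_inv_of_hasProd h2 (by positivity)
  simp only [inv_inv] at h2'
  have key := h4.mul (h2'.mul h2')
  have heq : (fun p : Nat.Primes =>
      (1 - invPowHom 4 (by norm_num) (p : ℕ))⁻¹ *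
        ((1 - invPowHom 2 (by norm_num) (p : ℕ)) * (1 - invPowHom 2 (by norm_num) (p : ℕ)))) =
      fun p : Nat.Primes => 1 - 2 / ((p : ℝ) ^ 2 + 1) := by
    funext p
    have hp2 : (2 : ℝ) ≤ (p : ℕ) := by exact_mod_cast p.prop.two_le
    have hp0 : (0 : ℝ) < (p : ℕ) := by linarith
    simp only [invPowHom, MonoidWithZeroHom.coe_mk, ZeroHom.coe_mk]
    have h1 : ((p : ℕ) : ℝ)⁻¹ ^ 4 ≠ 1 := by
      have : ((p : ℕ) : ℝ)⁻¹ ^ 4 < 1 := by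
        apply pow_lt_one₀ (by positivity)
        · rw [inv_lt_one_iff₀]; right; linarith
        · norm_num
      linarith
    have hne : 1 - ((p : ℕ) : ℝ)⁻¹ ^ 4 ≠ 0 := fun h => h1 (by linarith [sub_eq_zero.mp h])
    have hp2' : ((p : ℕ) : ℝ) ^ 2 + 1 ≠ 0 := by positivity
    have hx : ((p : ℕ) : ℝ) ≠ 0 := hp0.ne'
    set x : ℝ := ((p : ℕ) : ℝ) with hxdef
    have h16 : (2 : ℝ) ^ 4 ≤ x ^ 4 := pow_le_pow_left₀ (by norm_num) hp2 4
    have hne4 : x ^ 4 - 1 ≠ 0 := by norm_num at h16; intro h; linarith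
    have e1 : 1 - x⁻¹ ^ 4 = (x ^ 4 - 1) / x ^ 4 := by field_simp
    have e2 : 1 - x⁻¹ ^ 2 = (x ^ 2 - 1) / x ^ 2 := by field_simp
    rw [e1, e2, inv_div]
    rw [eq_sub_iff_add_eq]
    field_simp
    ring
  rw [heq] at key
  have hval : π ^ 4 / 90 * ((π ^ 2 / 6)⁻¹ * (π ^ 2 / 6)⁻¹) = 2 / 5 := by
    have : (π : ℝ) ≠ 0 := Real.pi_ne_zero
    field_simp
    ring
  rw [hval] at key
  exact ⟨key.multipliable, key.tprod_eq⟩
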